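/- Bellman-type law of total variance (Lemma: var of the paper, trajectory form): Let π be a policy, P a transition function, and c : S × A × {1,…,H} → ℝ≥0 a nonnegative cost function. For h ∈ {1,…,H−1} define μ(s,a,h) := Σ_{s'} P(s,a,h)(s') · J^{P,π,c}(s', h+1) and 𝕍(s,a,h) := Σ_{s'} P(s,a,h)(s') · (J^{P,π,c}(s', h+1) − μ(s,a,h))², and set 𝕍(s,a,H) := 0. Then Σ_{s∈S} Σ_{a∈A} Σ_{h=1}^H q(s,a,h) · 𝕍(s,a,h) ≤ Σ_{τ ∈ (S×A)^H} w(τ) · (Σ_{h=1}^H c(s_h(τ), a_h(τ), h) − J^{P,π,c}(s₀, 1))², where q(s,a,h) := Σ_{τ ∈ (S×A)^H} w(τ) · 𝟙[s_h(τ) = s and a_h(τ) = a]. -/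

import Mathlib

open Finset

/-- Finite-horizon occupancy measure `q_{P,π,(s̄,h̄)}`, defined recursively over layers. -/
noncomputable def occ {S A : Type*} [Fintype S] [Fintype A] [DecidableEq S]
    (π : S → ℕ → A → ℝ) (P : S → A → ℕ → S → ℝ) (sb : S) (hb : ℕ) :
    ℕ → S → A → ℝ
  | 0 => fun s a => if hb = 0 then (if s = sb then π s 0 a else 0) else 0
  | (h + 1) => fun s a =>
      if h + 1 < hb then 0
      else if h + 1 = hb then (if s = sb then π s (h + 1) a else 0)
      else π s (h + 1) a * ∑ s' : S, ∑ a' : A, P s' a' h s * occ π P sb hb h s' a'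

/-- State at (1-based) time `h ∈ {1,…,H}` of a trajectory `τ = (s_1,a_1,…,s_H,a_H)`. -/
noncomputable def stt {S A : Type*} [Nonempty S] (H : ℕ) (τ : Fin H → S × A) (h : ℕ) : S :=
  if hlt : h - 1 < H then (τ ⟨h - 1, hlt⟩).1 else Classical.arbitrary S

/-- Action at (1-based) time `h ∈ {1,…,H}` of a trajectory `τ = (s_1,a_1,…,s_H,a_H)`. -/
noncomputable def act {S A : Type*} [Nonempty A] (H : ℕ) (τ : Fin H → S × A) (h : ℕ) : A :=
  if hlt : h - 1 < H then (τ ⟨h - 1, hlt⟩).2 else Classical.arbitrary A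

/-- Weight of a trajectory:
`w(τ) = 𝟙[s_1 = s₀] · ∏_{h=1}^H π(s_h,h)(a_h) · ∏_{h=1}^{H−1} P(s_h,a_h,h)(s_{h+1})`. -/
noncomputable def wt {S A : Type*} [Nonempty S] [Nonempty A] [DecidableEq S]
    (H : ℕ) (s0 : S) (π : S → ℕ → A → ℝ) (P : S → A → ℕ → S → ℝ)
    (τ : Fin H → S × A) : ℝ :=
  (if stt H τ 1 = s0 then 1 else 0) *
    (∏ h ∈ Finset.Icc 1 H, π (stt H τ h) h (act H τ h)) *
    ∏ h ∈ Finset.Icc 1 (H - 1), P (stt H τ h) (act H τ h) h (stt H τ (h + 1))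

set_option linter.unusedSectionVars false

section Aux

variable {S A : Type*} [Fintype S] [Fintype A] [DecidableEq S] [DecidableEq A]
  [Nonempty S] [Nonempty A]

/-- sum over tuples via cons -/
lemma sum_pi_succ {X : Type*} [Fintype X] {k : ℕ} (f : (Fin (k+1) → X) → ℝ) :
    ∑ σ : Fin (k+1) → X, f σ = ∑ x : X, ∑ σ : Fin k → X, f (Fin.cons x σ) := by
  calc ∑ σ : Fin (k+1) → X, f σ
      = ∑ p : X × (Fin k → X), f (Fin.cons p.1 p.2) :=
        (Fintype.sum_equiv (Fin.consEquiv fun _ => X) _ _ fun p => rfl).symm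
    _ = _ := Fintype.sum_prod_type _

variable (π : S → ℕ → A → ℝ) (P : S → A → ℕ → S → ℝ)

/-- weight of a length-`k` trajectory starting at time `t` in state `s`. -/
noncomputable def W : (k : ℕ) → ℕ → S → (Fin k → S × A) → ℝ
  | 0, _, _, _ => 1
  | 1, t, s, σ => (if (σ 0).1 = s then 1 else 0) * π s t (σ 0).2
  | (k+2), t, s, σ => (if (σ 0).1 = s then 1 else 0) * π s t (σ 0).2 *
      P s (σ 0).2 t (σ 1).1 * W (k+1) (t+1) (σ 1).1 (Fin.tail σ)

variable (g : S → A → ℕ → ℝ)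

/-- recursive expected total of `g` over `k` steps from time `t`. -/
noncomputable def Jg : (k : ℕ) → ℕ → S → ℝ
  | 0, _, _ => 0
  | (k+1), t, s => ∑ a : A, π s t a * (g s a t + ∑ s' : S, P s a t s' * Jg k (t+1) s')

noncomputable def muk (k t : ℕ) (s : S) (a : A) : ℝ :=
  ∑ s' : S, P s a t s' * Jg π P g k (t+1) s'

noncomputable def Vk (k t : ℕ) (s : S) (a : A) : ℝ :=
  ∑ s' : S, P s a t s' * (Jg π P g k (t+1) s' - muk π P g k t s a) ^ 2

lemma Jg_succ (k t : ℕ) (s : S) : Jg π P g (k+1) t s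
    = ∑ a : A, π s t a * (g s a t + ∑ s' : S, P s a t s' * Jg π P g k (t+1) s') := rfl

noncomputable def Fk : (k : ℕ) → ℕ → S → ℝ
  | 0, _, _ => 0
  | (k+1), t, s => ∑ a : A, π s t a *
      (Vk π P g k t s a + ∑ s' : S, P s a t s' * Fk k (t+1) s')

lemma Fk_succ (k t : ℕ) (s : S) : Fk π P g (k+1) t s
    = ∑ a : A, π s t a *
        (Vk π P g k t s a + ∑ s' : S, P s a t s' * Fk π P g k (t+1) s') := rfl

lemma cons_sum (k t : ℕ) (s : S) (a : A) (σ' : Fin (k+1) → S × A) :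
    (∑ i : Fin (k+2), g ((Fin.cons (s, a) σ' : Fin (k+2) → S × A) i).1
        ((Fin.cons (s, a) σ' : Fin (k+2) → S × A) i).2 (t + i))
    = g s a t + ∑ i : Fin (k+1), g (σ' i).1 (σ' i).2 (t + 1 + i) := by
  rw [Fin.sum_univ_succ]
  simp only [Fin.cons_zero, Fin.cons_succ, Fin.val_zero, add_zero, Fin.val_succ]
  congr 1
  exact Finset.sum_congr rfl fun i _ => by rw [show t + (↑i + 1) = t + 1 + ↑i by omega]

lemma Wcol (k t : ℕ) (σ : Fin (k+1) → S × A) (s : S) :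
    W π P (k+1) t s σ = (if (σ 0).1 = s then 1 else 0) * W π P (k+1) t (σ 0).1 σ := by
  rcases k with _ | k <;>
  · by_cases h : (σ 0).1 = s
    · subst h; simp [W]
    · simp [W, h]

lemma sum_Wcol (k t : ℕ) (σ : Fin (k+1) → S × A) (f : S → ℝ) :
    ∑ s' : S, f s' * W π P (k+1) t s' σ = f (σ 0).1 * W π P (k+1) t (σ 0).1 σ := by
  have : ∀ s' : S, f s' * W π P (k+1) t s' σ =
      (if (σ 0).1 = s' then f s' * W π P (k+1) t (σ 0).1 σ else 0) := by
    intro s'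
    rw [Wcol]
    by_cases h : (σ 0).1 = s' <;> simp [h]
  rw [Finset.sum_congr rfl (fun s' _ => this s')]
  simp

lemma peel1 (t : ℕ) (s : S) (f : (Fin 1 → S × A) → ℝ) :
    ∑ σ : Fin 1 → S × A, W π P 1 t s σ * f σ
      = ∑ a : A, π s t a * f (fun _ => (s, a)) := by
  rw [sum_pi_succ]
  have step1 : ∀ x : S × A, ∑ σ' : Fin 0 → S × A,
      W π P 1 t s (Fin.cons x σ') * f (Fin.cons x σ')
      = (if x.1 = s then 1 else 0) * π s t x.2 * f (fun _ => x) := by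
    intro x
    rw [Fintype.sum_unique]
    have hfx : (Fin.cons x (default : Fin 0 → S × A) : Fin 1 → S × A) = fun _ => x := by
      funext i
      have : i = 0 := Fin.ext (by omega)
      subst this; rfl
    rw [hfx]
    simp [W]
  rw [Finset.sum_congr rfl fun x _ => step1 x, Fintype.sum_prod_type]
  have h2 : ∀ s1 : S, ∑ a : A, (if (s1, a).1 = s then 1 else 0) * π s t a * f (fun _ => (s1, a))
      = if s1 = s then ∑ a : A, π s t a * f (fun _ => (s1, a)) else 0 := by
    intro s1; by_cases h : s1 = s <;> simp [h]
  rw [Finset.sum_congr rfl fun s1 _ => h2 s1, Finset.sum_ite_eq' Finset.univ s]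
  simp

lemma peel (k t : ℕ) (s : S) (f : (Fin (k+2) → S × A) → ℝ) :
    ∑ σ : Fin (k+2) → S × A, W π P (k+2) t s σ * f σ
      = ∑ a : A, π s t a * ∑ s' : S, P s a t s' *
          ∑ σ' : Fin (k+1) → S × A, W π P (k+1) (t+1) s' σ' * f (Fin.cons (s, a) σ') := by
  rw [sum_pi_succ]
  have step1 : ∀ x : S × A, ∑ σ' : Fin (k+1) → S × A,
      W π P (k+2) t s (Fin.cons x σ') * f (Fin.cons x σ')
      = (if x.1 = s then 1 else 0) * π s t x.2 *
        ∑ σ' : Fin (k+1) → S × A, P s x.2 t (σ' 0).1 *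
          W π P (k+1) (t+1) (σ' 0).1 σ' * f (Fin.cons x σ') := by
    intro x
    rw [Finset.mul_sum]
    refine Finset.sum_congr rfl fun σ' _ => ?_
    have h1 : (Fin.cons x σ' : Fin (k+2) → S × A) 1 = σ' 0 := by
      rw [← Fin.succ_zero_eq_one, Fin.cons_succ]
    simp only [W, Fin.cons_zero, h1, Fin.tail_cons]
    ring
  rw [Finset.sum_congr rfl fun x _ => step1 x, Fintype.sum_prod_type]
  have h2 : ∀ s1 : S, ∑ a : A, (if ((s1, a) : S × A).1 = s then 1 else 0) * π s t a *
        (∑ σ' : Fin (k+1) → S × A, P s a t (σ' 0).1 *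
          W π P (k+1) (t+1) (σ' 0).1 σ' * f (Fin.cons (s1, a) σ'))
      = if s1 = s then ∑ a : A, π s t a *
        (∑ σ' : Fin (k+1) → S × A, P s a t (σ' 0).1 *
          W π P (k+1) (t+1) (σ' 0).1 σ' * f (Fin.cons (s1, a) σ')) else 0 := by
    intro s1; by_cases h : s1 = s <;> simp [h]
  rw [Finset.sum_congr rfl fun s1 _ => h2 s1, Finset.sum_ite_eq' Finset.univ s]
  simp only [Finset.mem_univ, if_pos]
  refine Finset.sum_congr rfl fun a _ => ?_
  congr 1
  have h3 : ∀ s' : S, P s a t s' * ∑ σ' : Fin (k+1) → S × A,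
        W π P (k+1) (t+1) s' σ' * f (Fin.cons (s, a) σ')
      = ∑ σ' : Fin (k+1) → S × A,
        (P s a t s' * f (Fin.cons (s, a) σ')) * W π P (k+1) (t+1) s' σ' := by
    intro s'; rw [Finset.mul_sum]; exact Finset.sum_congr rfl fun σ' _ => by ring
  rw [Finset.sum_congr rfl fun s' _ => h3 s', Finset.sum_comm]
  refine Finset.sum_congr rfl fun σ' _ => ?_
  rw [sum_Wcol]
  ring


variable (H : ℕ)

lemma mass (hπ1 : ∀ s, ∀ h ∈ Finset.Icc 1 H, ∑ a : A, π s h a = 1)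
    (hP1 : ∀ s a, ∀ h ∈ Finset.Icc 1 (H - 1), ∑ s' : S, P s a h s' = 1) :
    ∀ k, ∀ t, ∀ s : S, 1 ≤ t → t + k ≤ H + 1 →
      ∑ σ : Fin k → S × A, W π P k t s σ = 1 := by
  intro k
  induction k using Nat.twoStepInduction with
  | zero =>
    intro t s ht hk
    simp [W]
  | one =>
    intro t s ht hk
    have := peel1 π P t s (fun _ => (1 : ℝ))
    simp only [mul_one] at this
    rw [this]
    exact hπ1 s t (Finset.mem_Icc.mpr ⟨ht, by omega⟩)
  | more k ih1 ih2 =>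
    intro t s ht hk
    have := peel π P k t s (fun _ => (1 : ℝ))
    simp only [mul_one] at this
    rw [this]
    have hin : ∀ a : A, ∀ s' : S,
        ∑ σ' : Fin (k+1) → S × A, W π P (k+1) (t+1) s' σ' = 1 := fun a s' =>
      ih2 (t+1) s' (by omega) (by omega)
    have hstep : ∀ a : A, ∑ s' : S, P s a t s' *
        ∑ σ' : Fin (k+1) → S × A, W π P (k+1) (t+1) s' σ' = 1 := by
      intro a
      rw [Finset.sum_congr rfl fun s' _ => by rw [hin a s', mul_one]]
      exact hP1 s a t (Finset.mem_Icc.mpr ⟨ht, by omega⟩)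
    rw [Finset.sum_congr rfl fun a _ => by rw [hstep a, mul_one]]
    exact hπ1 s t (Finset.mem_Icc.mpr ⟨ht, by omega⟩)

lemma value (hπ1 : ∀ s, ∀ h ∈ Finset.Icc 1 H, ∑ a : A, π s h a = 1)
    (hP1 : ∀ s a, ∀ h ∈ Finset.Icc 1 (H - 1), ∑ s' : S, P s a h s' = 1) :
    ∀ k, ∀ t, ∀ s : S, 1 ≤ t → t + k ≤ H + 1 →
      ∑ σ : Fin k → S × A, W π P k t s σ *
        (∑ i : Fin k, g (σ i).1 (σ i).2 (t + i)) = Jg π P g k t s := by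
  intro k
  induction k using Nat.twoStepInduction with
  | zero =>
    intro t s ht hk
    simp [W, Jg]
  | one =>
    intro t s ht hk
    rw [peel1]
    simp only [Jg, Fin.sum_univ_one, mul_zero, Finset.sum_const_zero, add_zero]
    simp
  | more k ih1 ih2 =>
    intro t s ht hk
    rw [peel]
    have hcons := cons_sum g k t s
    have hinner : ∀ (a : A) (s' : S),
        ∑ σ' : Fin (k+1) → S × A, W π P (k+1) (t+1) s' σ' *
          (∑ i : Fin (k+2), g ((Fin.cons (s, a) σ' : Fin (k+2) → S × A) i).1
            ((Fin.cons (s, a) σ' : Fin (k+2) → S × A) i).2 (t + i))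
        = g s a t + Jg π P g (k+1) (t+1) s' := by
      intro a s'
      rw [Finset.sum_congr rfl fun σ' _ => by
        rw [hcons a σ', mul_add]]
      rw [Finset.sum_add_distrib]
      congr 1
      · rw [← Finset.sum_mul, mass π P H hπ1 hP1 (k+1) (t+1) s' (by omega) (by omega), one_mul]
      · exact ih2 (t+1) s' (by omega) (by omega)
    rw [Finset.sum_congr rfl fun a _ => by
      rw [Finset.sum_congr rfl fun s' _ => by rw [hinner a s']]]
    show ∑ a : A, π s t a * ∑ s' : S, P s a t s' * (g s a t + Jg π P g (k+1) (t+1) s')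
        = Jg π P g (k+2) t s
    rw [Jg_succ]
    refine Finset.sum_congr rfl fun a _ => ?_
    congr 1
    rw [Finset.sum_congr rfl fun s' _ => mul_add (P s a t s') (g s a t) (Jg π P g (k+1) (t+1) s'),
      Finset.sum_add_distrib]
    congr 1
    rw [← Finset.sum_mul, hP1 s a t (Finset.mem_Icc.mpr ⟨ht, by omega⟩), one_mul]


lemma mainIneq
    (hπ0 : ∀ s, ∀ h ∈ Finset.Icc 1 H, ∀ a, 0 ≤ π s h a)
    (hπ1 : ∀ s, ∀ h ∈ Finset.Icc 1 H, ∑ a : A, π s h a = 1)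
    (hP0 : ∀ s a, ∀ h ∈ Finset.Icc 1 (H - 1), ∀ s', 0 ≤ P s a h s')
    (hP1 : ∀ s a, ∀ h ∈ Finset.Icc 1 (H - 1), ∑ s' : S, P s a h s' = 1) :
    ∀ k, ∀ t, ∀ s : S, 1 ≤ t → t + k ≤ H + 1 →
      Fk π P g k t s ≤ ∑ σ : Fin k → S × A, W π P k t s σ *
        ((∑ i : Fin k, g (σ i).1 (σ i).2 (t + i)) - Jg π P g k t s) ^ 2 := by
  intro k
  induction k using Nat.twoStepInduction with
  | zero =>
    intro t s ht hk
    simp [W, Jg, Fk]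
  | one =>
    intro t s ht hk
    have hF : Fk π P g 1 t s = 0 := by
      simp [Fk, Vk, muk, Jg]
    rw [hF, peel1]
    refine Finset.sum_nonneg fun a _ => mul_nonneg
      (hπ0 s t (Finset.mem_Icc.mpr ⟨ht, by omega⟩) a) (sq_nonneg _)
  | more k ih1 ih2 =>
    intro t s ht hk
    have htH : t ∈ Finset.Icc 1 H := Finset.mem_Icc.mpr ⟨ht, by omega⟩
    have htH1 : t ∈ Finset.Icc 1 (H - 1) := Finset.mem_Icc.mpr ⟨ht, by omega⟩
    rw [peel, Fk_succ]
    refine Finset.sum_le_sum fun a _ => mul_le_mul_of_nonneg_left ?_ (hπ0 s t htH a)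
    -- notation
    set Jk2 := Jg π P g (k+2) t s with hJk2
    set JgN := fun s' : S => Jg π P g (k+1) (t+1) s' with hJgN
    set mk := muk π P g (k+1) t s a with hmk
    -- inner expectation for each s'
    have hE : ∀ s' : S,
        ∑ σ' : Fin (k+1) → S × A, W π P (k+1) (t+1) s' σ' *
          ((∑ i : Fin (k+2), g ((Fin.cons (s, a) σ' : Fin (k+2) → S × A) i).1
            ((Fin.cons (s, a) σ' : Fin (k+2) → S × A) i).2 (t + i)) - Jk2) ^ 2
        = (g s a t + JgN s' - Jk2) ^ 2 +
          ∑ σ' : Fin (k+1) → S × A, W π P (k+1) (t+1) s' σ' *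
            ((∑ i : Fin (k+1), g (σ' i).1 (σ' i).2 (t + 1 + i)) - JgN s') ^ 2 := by
      intro s'
      have hmass := mass π P H hπ1 hP1 (k+1) (t+1) s' (by omega) (by omega)
      have hval := value π P g H hπ1 hP1 (k+1) (t+1) s' (by omega) (by omega)
      have hz : ∑ σ' : Fin (k+1) → S × A, W π P (k+1) (t+1) s' σ' *
          ((∑ i : Fin (k+1), g (σ' i).1 (σ' i).2 (t + 1 + i)) - JgN s') = 0 := by
        rw [Finset.sum_congr rfl fun σ' _ => mul_sub _ _ _, Finset.sum_sub_distrib,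
          hval, ← Finset.sum_mul, hmass, one_mul, sub_self]
      calc ∑ σ' : Fin (k+1) → S × A, W π P (k+1) (t+1) s' σ' *
            ((∑ i : Fin (k+2), g ((Fin.cons (s, a) σ' : Fin (k+2) → S × A) i).1
              ((Fin.cons (s, a) σ' : Fin (k+2) → S × A) i).2 (t + i)) - Jk2) ^ 2
          = ∑ σ' : Fin (k+1) → S × A,
              ((g s a t + JgN s' - Jk2) ^ 2 * W π P (k+1) (t+1) s' σ'
              + (2 * (g s a t + JgN s' - Jk2)) * (W π P (k+1) (t+1) s' σ' *
                  ((∑ i : Fin (k+1), g (σ' i).1 (σ' i).2 (t + 1 + i)) - JgN s'))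
              + W π P (k+1) (t+1) s' σ' *
                  ((∑ i : Fin (k+1), g (σ' i).1 (σ' i).2 (t + 1 + i)) - JgN s') ^ 2) := by
            refine Finset.sum_congr rfl fun σ' _ => ?_
            rw [cons_sum g k t s a σ']
            ring
        _ = (g s a t + JgN s' - Jk2) ^ 2 +
            ∑ σ' : Fin (k+1) → S × A, W π P (k+1) (t+1) s' σ' *
              ((∑ i : Fin (k+1), g (σ' i).1 (σ' i).2 (t + 1 + i)) - JgN s') ^ 2 := by
            rw [Finset.sum_add_distrib, Finset.sum_add_distrib, ← Finset.mul_sum,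
              ← Finset.mul_sum, hmass, hz, mul_one, mul_zero, add_zero]
    have hRHS : ∑ s' : S, P s a t s' *
          ∑ σ' : Fin (k+1) → S × A, W π P (k+1) (t+1) s' σ' *
            ((∑ i : Fin (k+2), g ((Fin.cons (s, a) σ' : Fin (k+2) → S × A) i).1
              ((Fin.cons (s, a) σ' : Fin (k+2) → S × A) i).2 (t + i)) - Jk2) ^ 2
        = ∑ s' : S, P s a t s' * ((g s a t + JgN s' - Jk2) ^ 2 +
            ∑ σ' : Fin (k+1) → S × A, W π P (k+1) (t+1) s' σ' *
              ((∑ i : Fin (k+1), g (σ' i).1 (σ' i).2 (t + 1 + i)) - JgN s') ^ 2) :=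
      Finset.sum_congr rfl fun s' _ => by rw [hE s']
    rw [hRHS]
    have step1 : ∑ s' : S, P s a t s' *
          ((g s a t + JgN s' - Jk2) ^ 2 + Fk π P g (k+1) (t+1) s')
        ≤ ∑ s' : S, P s a t s' * ((g s a t + JgN s' - Jk2) ^ 2 +
            ∑ σ' : Fin (k+1) → S × A, W π P (k+1) (t+1) s' σ' *
              ((∑ i : Fin (k+1), g (σ' i).1 (σ' i).2 (t + 1 + i)) - JgN s') ^ 2) := by
      refine Finset.sum_le_sum fun s' _ => mul_le_mul_of_nonneg_left
        (add_le_add_right (ih2 (t+1) s' (by omega) (by omega)) _)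
        (hP0 s a t htH1 s')
    refine le_trans ?_ step1
    -- identity for the variance part
    have hy : ∑ s' : S, P s a t s' * (JgN s' - mk) = 0 := by
      rw [Finset.sum_congr rfl fun s' _ => mul_sub _ _ _, Finset.sum_sub_distrib,
        ← Finset.sum_mul, hP1 s a t htH1, one_mul]
      simp [hmk, muk, hJgN]
    have hxy : ∑ s' : S, P s a t s' * (g s a t + JgN s' - Jk2) ^ 2
        = (g s a t + mk - Jk2) ^ 2 + Vk π P g (k+1) t s a := by
      calc ∑ s' : S, P s a t s' * (g s a t + JgN s' - Jk2) ^ 2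
          = ∑ s' : S, ((g s a t + mk - Jk2) ^ 2 * P s a t s'
            + (2 * (g s a t + mk - Jk2)) * (P s a t s' * (JgN s' - mk))
            + P s a t s' * (JgN s' - mk) ^ 2) :=
            Finset.sum_congr rfl fun s' _ => by ring
        _ = (g s a t + mk - Jk2) ^ 2 + Vk π P g (k+1) t s a := by
            rw [Finset.sum_add_distrib, Finset.sum_add_distrib, ← Finset.mul_sum,
              ← Finset.mul_sum, hP1 s a t htH1, hy, mul_one, mul_zero, add_zero]
            rfl
    have expand : ∑ s' : S, P s a t s' *
          ((g s a t + JgN s' - Jk2) ^ 2 + Fk π P g (k+1) (t+1) s')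
        = ((g s a t + mk - Jk2) ^ 2 + Vk π P g (k+1) t s a)
          + ∑ s' : S, P s a t s' * Fk π P g (k+1) (t+1) s' := by
      rw [Finset.sum_congr rfl fun s' _ => mul_add _ _ _, Finset.sum_add_distrib, hxy]
    rw [expand]
    have : (0:ℝ) ≤ (g s a t + mk - Jk2) ^ 2 := sq_nonneg _
    linarith


lemma occ_lt (sb : S) (hb h' : ℕ) (h1 : 1 ≤ hb) (h2 : h' < hb) (s : S) (a : A) :
    occ π P sb hb h' s a = 0 := by
  cases h' with
  | zero => simp only [occ]; rw [if_neg (by omega)]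
  | succ n => simp only [occ]; rw [if_pos h2]

lemma occ_self (sb : S) (hb : ℕ) (h1 : 1 ≤ hb) (s : S) (a : A) :
    occ π P sb hb hb s a = if s = sb then π s hb a else 0 := by
  obtain ⟨m, rfl⟩ : ∃ m, hb = m + 1 := ⟨hb - 1, by omega⟩
  simp only [occ]
  simp

lemma sum_swap4 {α β γ δ : Type*} [Fintype α] [Fintype β] [Fintype γ] [Fintype δ]
    (F : α → β → γ → δ → ℝ) :
    ∑ x : α, ∑ y : β, ∑ z : γ, ∑ w : δ, F x y z w
      = ∑ z : γ, ∑ w : δ, ∑ x : α, ∑ y : β, F x y z w := by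
  have h1 : ∀ x : α, (∑ y : β, ∑ z : γ, ∑ w : δ, F x y z w)
      = ∑ z : γ, ∑ y : β, ∑ w : δ, F x y z w := fun x => Finset.sum_comm
  rw [Finset.sum_congr rfl fun x _ => h1 x, Finset.sum_comm]
  refine Finset.sum_congr rfl fun z _ => ?_
  have h2 : ∀ x : α, (∑ y : β, ∑ w : δ, F x y z w)
      = ∑ w : δ, ∑ y : β, F x y z w := fun x => Finset.sum_comm
  rw [Finset.sum_congr rfl fun x _ => h2 x, Finset.sum_comm]

lemma occ_push (sb : S) (hb : ℕ) (h1 : 1 ≤ hb) :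
    ∀ h', hb < h' → ∀ (s'' : S) (a'' : A),
      occ π P sb hb h' s'' a''
        = ∑ a : A, π sb hb a * ∑ s' : S, P sb a hb s' * occ π P s' (hb+1) h' s'' a'' := by
  refine Nat.le_induction ?_ ?_
  · -- h' = hb + 1
    intro s'' a''
    have hL : occ π P sb hb (hb+1) s'' a''
        = π s'' (hb+1) a'' * ∑ s' : S, ∑ a' : A, P s' a' hb s'' * occ π P sb hb hb s' a' := by
      obtain ⟨m, rfl⟩ : ∃ m, hb = m + 1 := ⟨hb - 1, by omega⟩
      simp only [occ]
      rw [if_neg (by omega), if_neg (by omega)]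
    have hcol : ∀ s' : S, ∑ a' : A, P s' a' hb s'' * occ π P sb hb hb s' a'
        = if s' = sb then ∑ a' : A, P s' a' hb s'' * π s' hb a' else 0 := by
      intro s'
      by_cases h : s' = sb
      · rw [if_pos h]
        exact Finset.sum_congr rfl fun a' _ => by rw [occ_self π P sb hb h1, if_pos h]
      · rw [if_neg h]
        rw [Finset.sum_congr rfl fun a' _ => by
          rw [occ_self π P sb hb h1, if_neg h, mul_zero]]
        exact Finset.sum_const_zero
    have hR : ∀ a : A, ∑ s' : S, P sb a hb s' * occ π P s' (hb+1) (hb+1) s'' a''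
        = P sb a hb s'' * π s'' (hb+1) a'' := by
      intro a
      have : ∀ s' : S, P sb a hb s' * occ π P s' (hb+1) (hb+1) s'' a''
          = if s'' = s' then P sb a hb s' * π s'' (hb+1) a'' else 0 := by
        intro s'
        rw [occ_self π P s' (hb+1) (by omega)]
        by_cases h : s'' = s' <;> simp [h]
      rw [Finset.sum_congr rfl fun s' _ => this s', Finset.sum_ite_eq Finset.univ s'']
      simp
    calc occ π P sb hb (hb+1) s'' a''
        = π s'' (hb+1) a'' * ∑ a' : A, P sb a' hb s'' * π sb hb a' := by
          rw [hL, Finset.sum_congr rfl fun s' _ => hcol s',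
            Finset.sum_ite_eq' Finset.univ sb]
          simp only [Finset.mem_univ, if_pos]
      _ = ∑ a : A, π sb hb a * (P sb a hb s'' * π s'' (hb+1) a'') := by
          rw [Finset.mul_sum]
          exact Finset.sum_congr rfl fun a _ => by ring
      _ = ∑ a : A, π sb hb a * ∑ s' : S, P sb a hb s' * occ π P s' (hb+1) (hb+1) s'' a'' :=
          Finset.sum_congr rfl fun a _ => by rw [hR a]
  · -- step h' → h'+1
    intro h' hh' ih s'' a''
    have hL : occ π P sb hb (h'+1) s'' a''
        = π s'' (h'+1) a'' * ∑ s1 : S, ∑ a1 : A, P s1 a1 h' s'' * occ π P sb hb h' s1 a1 := by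
      simp only [occ]
      rw [if_neg (by omega), if_neg (by omega)]
    have hR : ∀ s' : S, occ π P s' (hb+1) (h'+1) s'' a''
        = π s'' (h'+1) a'' * ∑ s1 : S, ∑ a1 : A, P s1 a1 h' s'' * occ π P s' (hb+1) h' s1 a1 := by
      intro s'
      simp only [occ]
      rw [if_neg (by omega), if_neg (by omega)]
    calc occ π P sb hb (h'+1) s'' a''
        = π s'' (h'+1) a'' * ∑ s1 : S, ∑ a1 : A, P s1 a1 h' s'' *
            (∑ a : A, π sb hb a * ∑ s' : S, P sb a hb s' * occ π P s' (hb+1) h' s1 a1) := by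
          rw [hL]
          congr 1
          exact Finset.sum_congr rfl fun s1 _ => Finset.sum_congr rfl fun a1 _ => by
            rw [ih s1 a1]
      _ = ∑ s1 : S, ∑ a1 : A, ∑ a : A, ∑ s' : S,
            π s'' (h'+1) a'' * (P s1 a1 h' s'' * (π sb hb a *
              (P sb a hb s' * occ π P s' (hb+1) h' s1 a1))) := by
          simp only [Finset.mul_sum]
      _ = ∑ a : A, ∑ s' : S, ∑ s1 : S, ∑ a1 : A,
            π s'' (h'+1) a'' * (P s1 a1 h' s'' * (π sb hb a *
              (P sb a hb s' * occ π P s' (hb+1) h' s1 a1))) := sum_swap4 _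
      _ = ∑ a : A, π sb hb a * ∑ s' : S, P sb a hb s' * occ π P s' (hb+1) (h'+1) s'' a'' := by
          refine Finset.sum_congr rfl fun a _ => ?_
          rw [Finset.mul_sum]
          refine Finset.sum_congr rfl fun s' _ => ?_
          rw [hR s']
          simp only [Finset.mul_sum]
          refine Finset.sum_congr rfl fun s1 _ => Finset.sum_congr rfl fun a1 _ => by ring


lemma sum_swap3 {α β : Type*} [Fintype α] [Fintype β] (T : Finset ℕ) (F : α → β → ℕ → ℝ) :
    ∑ x : α, ∑ y : β, ∑ z ∈ T, F x y z = ∑ z ∈ T, ∑ x : α, ∑ y : β, F x y z := by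
  have h1 : ∀ x : α, ∑ y : β, ∑ z ∈ T, F x y z = ∑ z ∈ T, ∑ y : β, F x y z :=
    fun x => Finset.sum_comm
  rw [Finset.sum_congr rfl fun x _ => h1 x, Finset.sum_comm]

lemma Jocc_tailterm (t h' : ℕ) (ht : 1 ≤ t) (hth : t < h') (s : S) :
    ∑ s' : S, ∑ a' : A, occ π P s t h' s' a' * g s' a' h'
      = ∑ a : A, π s t a * ∑ s1 : S, P s a t s1 *
          (∑ s' : S, ∑ a' : A, occ π P s1 (t+1) h' s' a' * g s' a' h') := by
  calc ∑ s' : S, ∑ a' : A, occ π P s t h' s' a' * g s' a' h'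
      = ∑ s' : S, ∑ a' : A, (∑ a : A, π s t a * ∑ s1 : S, P s a t s1 *
          occ π P s1 (t+1) h' s' a') * g s' a' h' :=
        Finset.sum_congr rfl fun s' _ => Finset.sum_congr rfl fun a' _ => by
          rw [occ_push π P s t ht h' hth s' a']
    _ = ∑ s' : S, ∑ a' : A, ∑ a : A, ∑ s1 : S,
          π s t a * (P s a t s1 * (occ π P s1 (t+1) h' s' a' * g s' a' h')) := by
        simp only [Finset.sum_mul, Finset.mul_sum]
        refine Finset.sum_congr rfl fun s' _ => Finset.sum_congr rfl fun a' _ =>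
          Finset.sum_congr rfl fun a _ => Finset.sum_congr rfl fun s1 _ => by ring
    _ = ∑ a : A, ∑ s1 : S, ∑ s' : S, ∑ a' : A,
          π s t a * (P s a t s1 * (occ π P s1 (t+1) h' s' a' * g s' a' h')) := sum_swap4 _
    _ = ∑ a : A, π s t a * ∑ s1 : S, P s a t s1 *
          (∑ s' : S, ∑ a' : A, occ π P s1 (t+1) h' s' a' * g s' a' h') := by
        simp only [Finset.mul_sum]

lemma Jocc_head (t : ℕ) (ht : 1 ≤ t) (s : S) :
    ∑ s' : S, ∑ a' : A, occ π P s t t s' a' * g s' a' t = ∑ a : A, π s t a * g s a t := by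
  have h1 : ∀ s' : S, ∑ a' : A, occ π P s t t s' a' * g s' a' t
      = if s' = s then ∑ a' : A, π s' t a' * g s' a' t else 0 := by
    intro s'
    by_cases h : s' = s
    · rw [if_pos h]
      exact Finset.sum_congr rfl fun a' _ => by rw [occ_self π P s t ht, if_pos h]
    · rw [if_neg h, Finset.sum_congr rfl fun a' _ => by
        rw [occ_self π P s t ht, if_neg h, zero_mul]]
      exact Finset.sum_const_zero
  rw [Finset.sum_congr rfl fun s' _ => h1 s', Finset.sum_ite_eq' Finset.univ s]
  simp

lemma Jocc_split (t : ℕ) (ht : 1 ≤ t) (htH : t ≤ H) (s : S) :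
    (∑ s' : S, ∑ a' : A, ∑ h' ∈ Finset.Icc 1 H, occ π P s t h' s' a' * g s' a' h')
      = (∑ a : A, π s t a * g s a t)
        + ∑ h' ∈ Finset.Ico (t+1) (H+1), ∑ s' : S, ∑ a' : A,
            occ π P s t h' s' a' * g s' a' h' := by
  have hzero : ∑ h' ∈ Finset.Ico 1 t, ∑ s' : S, ∑ a' : A,
      occ π P s t h' s' a' * g s' a' h' = 0 :=
    Finset.sum_eq_zero fun h' hh' => Finset.sum_eq_zero fun s' _ =>
      Finset.sum_eq_zero fun a' _ => by
        rw [occ_lt π P s t h' ht (Finset.mem_Ico.mp hh').2, zero_mul]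
  rw [sum_swap3, ← Finset.Ico_add_one_right_eq_Icc,
    ← Finset.sum_Ico_consecutive _ (show 1 ≤ t by omega) (show t ≤ H+1 by omega),
    hzero, zero_add, Finset.sum_eq_sum_Ico_succ_bot (show t < H+1 by omega)]
  congr 1
  exact Jocc_head π P g t ht s

lemma Jocc_eq : ∀ k, ∀ t, 1 ≤ t → t + k = H → ∀ s : S,
    (∑ s' : S, ∑ a' : A, ∑ h' ∈ Finset.Icc 1 H, occ π P s t h' s' a' * g s' a' h')
      = Jg π P g (k+1) t s := by
  intro k
  induction k with
  | zero =>
    intro t ht htH s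
    have hIco : Finset.Ico (t+1) (H+1) = ∅ := by
      rw [show t = H from by omega]; exact Finset.Ico_self _
    rw [Jocc_split π P g H t ht (by omega) s, hIco, Finset.sum_empty, add_zero, Jg_succ]
    simp [Jg]
  | succ k ih =>
    intro t ht htH s
    rw [Jocc_split π P g H t ht (by omega) s]
    have htail : ∑ h' ∈ Finset.Ico (t+1) (H+1), ∑ s' : S, ∑ a' : A,
          occ π P s t h' s' a' * g s' a' h'
        = ∑ a : A, π s t a * ∑ s1 : S, P s a t s1 * Jg π P g (k+1) (t+1) s1 := by
      rw [Finset.sum_congr rfl fun h' hh' =>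
        Jocc_tailterm π P g t h' ht (Finset.mem_Ico.mp hh').1 s]
      rw [Finset.sum_comm]
      refine Finset.sum_congr rfl fun a _ => ?_
      rw [← Finset.mul_sum]
      congr 1
      rw [Finset.sum_comm]
      refine Finset.sum_congr rfl fun s1 _ => ?_
      rw [← Finset.mul_sum]
      congr 1
      have hzero2 : ∑ h' ∈ Finset.Ico 1 (t+1), ∑ s' : S, ∑ a' : A,
          occ π P s1 (t+1) h' s' a' * g s' a' h' = 0 :=
        Finset.sum_eq_zero fun h' hh' => Finset.sum_eq_zero fun s' _ =>
          Finset.sum_eq_zero fun a' _ => by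
            rw [occ_lt π P s1 (t+1) h' (by omega) (Finset.mem_Ico.mp hh').2, zero_mul]
      rw [← ih (t+1) (by omega) (by omega) s1, sum_swap3, ← Finset.Ico_add_one_right_eq_Icc,
        ← Finset.sum_Ico_consecutive _ (show 1 ≤ t+1 by omega) (show t+1 ≤ H+1 by omega),
        hzero2, zero_add]
    rw [htail, Jg_succ, ← Finset.sum_add_distrib]
    exact Finset.sum_congr rfl fun a _ => by ring


lemma W_closed : ∀ k t (s : S) (τ : Fin (k+1) → S × A),
    W π P (k+1) t s τ
      = (if (τ 0).1 = s then 1 else 0) *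
        (∏ i : Fin (k+1), π (τ i).1 (t + i) (τ i).2) *
        ∏ i : Fin k, P (τ i.castSucc).1 (τ i.castSucc).2 (t + i) (τ i.succ).1 := by
  intro k
  induction k with
  | zero =>
    intro t s τ
    by_cases h : (τ 0).1 = s
    · simp [W, h]
    · simp [W, h]
  | succ k ih =>
    intro t s τ
    by_cases h : (τ 0).1 = s
    · have htail : W π P (k+1) (t+1) (τ 1).1 (Fin.tail τ)
          = (∏ i : Fin (k+1), π (τ i.succ).1 (t + 1 + i) (τ i.succ).2) *
            ∏ i : Fin k, P (τ i.castSucc.succ).1 (τ i.castSucc.succ).2 (t + 1 + i)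
              (τ i.succ.succ).1 := by
        rw [ih (t+1) (τ 1).1 (Fin.tail τ)]
        have h0 : Fin.tail τ 0 = τ 1 := by
          show τ (Fin.succ 0) = τ 1
          rw [Fin.succ_zero_eq_one]
        rw [h0, if_pos rfl, one_mul]
        rfl
      have hπprod : ∏ i : Fin (k+2), π (τ i).1 (t + i) (τ i).2
          = π (τ 0).1 t (τ 0).2 *
            ∏ i : Fin (k+1), π (τ i.succ).1 (t + 1 + i) (τ i.succ).2 := by
        rw [Fin.prod_univ_succ]
        simp only [Fin.val_zero, add_zero]
        congr 1
        exact Finset.prod_congr rfl fun i _ => by rw [Fin.val_succ,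
          show t + (↑i + 1) = t + 1 + ↑i from by omega]
      have hPprod : ∏ i : Fin (k+1), P (τ i.castSucc).1 (τ i.castSucc).2 (t + i) (τ i.succ).1
          = P (τ 0).1 (τ 0).2 t (τ 1).1 *
            ∏ i : Fin k, P (τ i.castSucc.succ).1 (τ i.castSucc.succ).2 (t + 1 + i)
              (τ i.succ.succ).1 := by
        rw [Fin.prod_univ_succ]
        congr 1
        refine Finset.prod_congr rfl fun i _ => ?_
        rw [← Fin.succ_castSucc, Fin.val_succ,
          show t + (↑i + 1) = t + 1 + ↑i from by omega]
      show (if (τ 0).1 = s then 1 else 0) * π s t (τ 0).2 * P s (τ 0).2 t (τ 1).1 *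
          W π P (k+1) (t+1) (τ 1).1 (Fin.tail τ) = _
      rw [htail, hπprod, hPprod, if_pos h, ← h]
      ring
    · show (if (τ 0).1 = s then 1 else 0) * π s t (τ 0).2 * P s (τ 0).2 t (τ 1).1 *
          W π P (k+1) (t+1) (τ 1).1 (Fin.tail τ)
        = (if (τ 0).1 = s then 1 else 0) * _ * _
      rw [if_neg h]
      ring


lemma stt_eval (m : ℕ) (τ : Fin (m+1) → S × A) (j : ℕ) (hj : j < m+1) :
    stt (m+1) τ (1 + j) = (τ ⟨j, hj⟩).1 := by
  simp only [stt, Nat.add_sub_cancel_left]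
  rw [dif_pos hj]

lemma act_eval (m : ℕ) (τ : Fin (m+1) → S × A) (j : ℕ) (hj : j < m+1) :
    act (m+1) τ (1 + j) = (τ ⟨j, hj⟩).2 := by
  simp only [act, Nat.add_sub_cancel_left]
  rw [dif_pos hj]

lemma reindex_sum (m : ℕ) (τ : Fin (m+1) → S × A) (f : S → A → ℕ → ℝ) :
    ∑ h ∈ Finset.Icc 1 (m+1), f (stt (m+1) τ h) (act (m+1) τ h) h
      = ∑ i : Fin (m+1), f (τ i).1 (τ i).2 (1 + i) := by
  rw [← Finset.Ico_add_one_right_eq_Icc, Finset.sum_Ico_eq_sum_range]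
  simp only [Nat.succ_sub_one, Nat.add_sub_cancel]
  rw [← Fin.sum_univ_eq_sum_range
    (fun j => f (stt (m+1) τ (1+j)) (act (m+1) τ (1+j)) (1+j)) (m+1)]
  refine Finset.sum_congr rfl fun i _ => ?_
  rw [stt_eval m τ i i.isLt, act_eval m τ i i.isLt]

lemma wt_eq_W (s0 : S) (m : ℕ) (τ : Fin (m+1) → S × A) :
    wt (m+1) s0 π P τ = W π P (m+1) 1 s0 τ := by
  rw [W_closed π P m 1 s0 τ]
  show (if stt (m+1) τ 1 = s0 then 1 else 0) * _ * _ = _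
  have h1 : stt (m+1) τ 1 = (τ 0).1 := by
    have := stt_eval m τ 0 (by omega)
    simpa using this
  have hprod1 : ∏ h ∈ Finset.Icc 1 (m+1), π (stt (m+1) τ h) h (act (m+1) τ h)
      = ∏ i : Fin (m+1), π (τ i).1 (1 + i) (τ i).2 := by
    rw [← Finset.Ico_add_one_right_eq_Icc, Finset.prod_Ico_eq_prod_range]
    simp only [Nat.succ_sub_one, Nat.add_sub_cancel]
    rw [← Fin.prod_univ_eq_prod_range
      (fun j => π (stt (m+1) τ (1+j)) (1+j) (act (m+1) τ (1+j))) (m+1)]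
    refine Finset.prod_congr rfl fun i _ => ?_
    rw [stt_eval m τ i i.isLt, act_eval m τ i i.isLt]
  have hprod2 : ∏ h ∈ Finset.Icc 1 (m+1-1),
        P (stt (m+1) τ h) (act (m+1) τ h) h (stt (m+1) τ (h+1))
      = ∏ i : Fin m, P (τ i.castSucc).1 (τ i.castSucc).2 (1 + i) (τ i.succ).1 := by
    rw [← Finset.Ico_add_one_right_eq_Icc, Finset.prod_Ico_eq_prod_range]
    simp only [Nat.succ_sub_one, Nat.add_sub_cancel]
    rw [← Fin.prod_univ_eq_prod_range
      (fun j => P (stt (m+1) τ (1+j)) (act (m+1) τ (1+j)) (1+j) (stt (m+1) τ (1+j+1))) m]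
    refine Finset.prod_congr rfl fun i _ => ?_
    have e1 : stt (m+1) τ (1 + ↑i) = (τ i.castSucc).1 := by
      rw [stt_eval m τ i (by omega)]; rfl
    have e2 : act (m+1) τ (1 + ↑i) = (τ i.castSucc).2 := by
      rw [act_eval m τ i (by omega)]; rfl
    have e3 : stt (m+1) τ (1 + ↑i + 1) = (τ i.succ).1 := by
      rw [show 1 + ↑i + 1 = 1 + (↑i + 1) from by omega,
        stt_eval m τ (↑i + 1) (by omega)]
      rfl
    rw [e1, e2, e3]
  rw [h1, hprod1, hprod2]


lemma ind_collapse (x : S) (y : A) (F : S → A → ℝ) :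
    ∑ s : S, ∑ a : A, (if x = s ∧ y = a then (1:ℝ) else 0) * F s a = F x y := by
  have h1 : ∀ s : S, ∑ a : A, (if x = s ∧ y = a then (1:ℝ) else 0) * F s a
      = if x = s then F s y else 0 := by
    intro s
    by_cases hs : x = s
    · simp only [hs, true_and, if_pos]
      rw [Finset.sum_congr rfl fun a _ => boole_mul (y = a) (F s a),
        Finset.sum_ite_eq Finset.univ y (fun a => F s a)]
      simp
    · simp [hs]
  rw [Finset.sum_congr rfl fun s _ => h1 s, Finset.sum_ite_eq Finset.univ x]
  simp

lemma swap_out_tau {n : ℕ} (T : Finset ℕ) (F : S → A → ℕ → (Fin n → S × A) → ℝ) :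
    ∑ s : S, ∑ a : A, ∑ h ∈ T, ∑ τ : Fin n → S × A, F s a h τ
      = ∑ τ : Fin n → S × A, ∑ s : S, ∑ a : A, ∑ h ∈ T, F s a h τ := by
  have h1 : ∀ (s : S) (a : A), ∑ h ∈ T, ∑ τ : Fin n → S × A, F s a h τ
      = ∑ τ : Fin n → S × A, ∑ h ∈ T, F s a h τ := fun s a => Finset.sum_comm
  rw [Finset.sum_congr rfl fun s _ => Finset.sum_congr rfl fun a _ => h1 s a]
  have h2 : ∀ s : S, ∑ a : A, ∑ τ : Fin n → S × A, (∑ h ∈ T, F s a h τ)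
      = ∑ τ : Fin n → S × A, ∑ a : A, ∑ h ∈ T, F s a h τ := fun s => Finset.sum_comm
  rw [Finset.sum_congr rfl fun s _ => h2 s, Finset.sum_comm]

end Aux

/-- Bellman-type law of total variance (Lemma var, trajectory form): with
`J(s,h) = J^{P,π,c}(s,h)`, `μ(s,a,h) = ∑_{s'} P(s'|s,a,h) J(s',h+1)`,
`𝕍(s,a,h) = ∑_{s'} P(s'|s,a,h) (J(s',h+1) − μ(s,a,h))²` for `h < H` and `𝕍(s,a,H) = 0`,
`∑_{s,a,h} q(s,a,h) 𝕍(s,a,h) ≤ ∑_τ w(τ) (∑_h c(s_h(τ),a_h(τ),h) − J(s₀,1))²`. -/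

theorem bellman_law_of_total_variance
    {S A : Type*} [Fintype S] [Fintype A] [DecidableEq S] [DecidableEq A]
    [Nonempty S] [Nonempty A]
    (H : ℕ) (hH : 2 ≤ H) (s0 : S)
    (π : S → ℕ → A → ℝ)
    (hπ0 : ∀ s, ∀ h ∈ Finset.Icc 1 H, ∀ a, 0 ≤ π s h a)
    (hπ1 : ∀ s, ∀ h ∈ Finset.Icc 1 H, ∑ a : A, π s h a = 1)
    (P : S → A → ℕ → S → ℝ)
    (hP0 : ∀ s a, ∀ h ∈ Finset.Icc 1 (H - 1), ∀ s', 0 ≤ P s a h s')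
    (hP1 : ∀ s a, ∀ h ∈ Finset.Icc 1 (H - 1), ∑ s' : S, P s a h s' = 1)
    (c : S → A → ℕ → ℝ)
    (hc0 : ∀ s a, ∀ h ∈ Finset.Icc 1 H, 0 ≤ c s a h) :
    let J : S → ℕ → ℝ := fun s h =>
      ∑ s' : S, ∑ a' : A, ∑ h' ∈ Finset.Icc 1 H, occ π P s h h' s' a' * c s' a' h'
    let mu : S → A → ℕ → ℝ := fun s a h => ∑ s' : S, P s a h s' * J s' (h + 1)
    let V : S → A → ℕ → ℝ := fun s a h =>
      if h = H then 0 else ∑ s' : S, P s a h s' * (J s' (h + 1) - mu s a h) ^ 2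
    let q : S → A → ℕ → ℝ := fun s a h =>
      ∑ τ : Fin H → S × A, wt H s0 π P τ *
        (if stt H τ h = s ∧ act H τ h = a then 1 else 0)
    ∑ s : S, ∑ a : A, ∑ h ∈ Finset.Icc 1 H, q s a h * V s a h ≤
      ∑ τ : Fin H → S × A, wt H s0 π P τ *
        ((∑ h ∈ Finset.Icc 1 H, c (stt H τ h) (act H τ h) h) - J s0 1) ^ 2 := by
  obtain ⟨m, rfl⟩ : ∃ m, H = m + 1 := ⟨H - 1, by omega⟩
  intro J mu V q
  have hJ : ∀ t, 1 ≤ t → ∀ k, t + k = m + 1 → ∀ s, J s t = Jg π P c (k+1) t s :=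
    fun t ht k hk s => Jocc_eq π P c (m+1) k t ht hk s
  -- LHS massage
  have hq1 : ∀ (s : S) (a : A) (h : ℕ), q s a h * V s a h
      = ∑ τ : Fin (m+1) → S × A, wt (m+1) s0 π P τ *
          ((if stt (m+1) τ h = s ∧ act (m+1) τ h = a then (1:ℝ) else 0) * V s a h) := by
    intro s a h
    show (∑ τ : Fin (m+1) → S × A, wt (m+1) s0 π P τ *
        (if stt (m+1) τ h = s ∧ act (m+1) τ h = a then (1:ℝ) else 0)) * V s a h = _
    rw [Finset.sum_mul]
    exact Finset.sum_congr rfl fun τ _ => by ring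
  have hA : ∑ s : S, ∑ a : A, ∑ h ∈ Finset.Icc 1 (m+1), q s a h * V s a h
      = ∑ τ : Fin (m+1) → S × A, wt (m+1) s0 π P τ *
          ∑ h ∈ Finset.Icc 1 (m+1), V (stt (m+1) τ h) (act (m+1) τ h) h := by
    rw [Finset.sum_congr rfl fun s _ => Finset.sum_congr rfl fun a _ =>
      Finset.sum_congr rfl fun h _ => hq1 s a h]
    rw [swap_out_tau]
    refine Finset.sum_congr rfl fun τ _ => ?_
    rw [Finset.mul_sum]
    have hswap : ∑ s : S, ∑ a : A, ∑ h ∈ Finset.Icc 1 (m+1), wt (m+1) s0 π P τ *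
          ((if stt (m+1) τ h = s ∧ act (m+1) τ h = a then (1:ℝ) else 0) * V s a h)
        = ∑ h ∈ Finset.Icc 1 (m+1), ∑ s : S, ∑ a : A, wt (m+1) s0 π P τ *
          ((if stt (m+1) τ h = s ∧ act (m+1) τ h = a then (1:ℝ) else 0) * V s a h) :=
      sum_swap3 _ _
    rw [hswap]
    refine Finset.sum_congr rfl fun h _ => ?_
    rw [Finset.sum_congr rfl fun s _ => (Finset.mul_sum _ _ _).symm, ← Finset.mul_sum]
    congr 1
    exact ind_collapse (stt (m+1) τ h) (act (m+1) τ h) (fun s a => V s a h)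
  -- convert V to Vk
  have hVk : ∀ t, 1 ≤ t → ∀ k, t + k = m + 1 → ∀ s a, V s a t = Vk π P c k t s a := by
    intro t ht k hk s a
    by_cases hT : t = m + 1
    · have hk0 : k = 0 := by omega
      subst hk0; subst hT
      show (if m + 1 = m + 1 then (0:ℝ)
        else ∑ s' : S, P s a (m+1) s' * (J s' (m+1+1) - mu s a (m+1)) ^ 2)
        = Vk π P c 0 (m+1) s a
      rw [if_pos rfl]
      simp [Vk, muk, Jg]
    · obtain ⟨k', rfl⟩ : ∃ k', k = k' + 1 := ⟨k - 1, by omega⟩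
      have hJt : ∀ s', J s' (t+1) = Jg π P c (k'+1) (t+1) s' :=
        fun s' => hJ (t+1) (by omega) k' (by omega) s'
      have hmu : mu s a t = muk π P c (k'+1) t s a := by
        show (∑ s'' : S, P s a t s'' * J s'' (t+1)) = _
        exact Finset.sum_congr rfl fun s'' _ => by rw [hJt s'']
      show (if t = m + 1 then (0:ℝ)
        else ∑ s' : S, P s a t s' * (J s' (t+1) - mu s a t) ^ 2)
        = Vk π P c (k'+1) t s a
      rw [if_neg hT]
      exact Finset.sum_congr rfl fun s' _ => by rw [hJt s', hmu]
  -- Jg of V equals Fk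
  have hFk : ∀ k, ∀ t, 1 ≤ t → t + k = m + 2 → ∀ s, Jg π P V k t s = Fk π P c k t s := by
    intro k
    induction k with
    | zero => intro t ht hk s; rfl
    | succ k ih =>
      intro t ht hk s
      rw [Jg_succ, Fk_succ]
      refine Finset.sum_congr rfl fun a _ => ?_
      congr 1
      rw [hVk t ht k (by omega) s a]
      congr 1
      exact Finset.sum_congr rfl fun s' _ => by rw [ih (t+1) (by omega) (by omega) s']
  -- put LHS together
  have hLHS : ∑ s : S, ∑ a : A, ∑ h ∈ Finset.Icc 1 (m+1), q s a h * V s a h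
      = Fk π P c (m+1) 1 s0 := by
    rw [hA]
    rw [Finset.sum_congr rfl fun τ _ => by
      rw [wt_eq_W π P s0 m τ, reindex_sum m τ V]]
    rw [value π P V (m+1) hπ1 hP1 (m+1) 1 s0 le_rfl (by omega)]
    exact hFk (m+1) 1 le_rfl (by omega) s0
  -- RHS
  have hRHS : ∑ τ : Fin (m+1) → S × A, wt (m+1) s0 π P τ *
        ((∑ h ∈ Finset.Icc 1 (m+1), c (stt (m+1) τ h) (act (m+1) τ h) h) - J s0 1) ^ 2
      = ∑ τ : Fin (m+1) → S × A, W π P (m+1) 1 s0 τ *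
        ((∑ i : Fin (m+1), c (τ i).1 (τ i).2 (1 + i)) - Jg π P c (m+1) 1 s0) ^ 2 :=
    Finset.sum_congr rfl fun τ _ => by
      rw [wt_eq_W π P s0 m τ, reindex_sum m τ c, hJ 1 le_rfl m (by omega) s0]
  rw [hLHS, hRHS]
  exact mainIneq π P c (m+1) hπ0 hπ1 hP0 hP1 (m+1) 1 s0 le_rfl (by omega)
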